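/- Let ε : ℝ → ℝ be a nonincreasing nonnegative function, γ > 1, τ > 0, H ∈ (0,1), and set x_k = τ·γ^k for k ∈ ℤ. Then for all σ ≥ 0 and c > 0, ∑_{k=−∞}^{∞} ε((σ + c·x_k)/x_k^H) ≤ (1/(H(1−H)·log γ)) · ∫_z^∞ ε(x)/x dx, where z = c^H·σ^(1−H)/γ^(H(1−H)). -/

import Mathlib

set_option maxHeartbeats 1000000
open Set MeasureTheory Real

lemma aux_log_max {x y : ℝ} (hx : 0 < x) (hy : 0 < y) :
    Real.log (max x y) = max (Real.log x) (Real.log y) := by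
  rcases le_total x y with h | h
  · rw [max_eq_right h, max_eq_right ((Real.log_le_log_iff hx hy).mpr h)]
  · rw [max_eq_left h, max_eq_left ((Real.log_le_log_iff hy hx).mpr h)]

lemma aux_max (H δ u v w : ℝ) (hH0 : 0 < H) (hH1 : H < 1) (hδ : 0 < δ)
    (hkey : (1-H)*u + H*v = w + H*(1-H)*δ) :
    H*(1-H)*δ ≤ (1-H)*(max w u - max w (u - H*δ)) + H*(max w v - max w (v - (1-H)*δ)) := by
  rcases le_or_gt w (u - H*δ) with h1 | h1
  · have e1 : max w u = u := max_eq_right (by nlinarith)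
    have e2 : max w (u - H*δ) = u - H*δ := max_eq_right h1
    have e3 : max w (v - (1-H)*δ) ≤ max w v := max_le_max le_rfl (by nlinarith)
    nlinarith
  rcases le_or_gt w (v - (1-H)*δ) with h2 | h2
  · have e1 : max w v = v := max_eq_right (by nlinarith)
    have e2 : max w (v - (1-H)*δ) = v - (1-H)*δ := max_eq_right h2
    have e3 : max w (u - H*δ) ≤ max w u := max_le_max le_rfl (by nlinarith)
    nlinarith
  · have e2 : max w (u - H*δ) = w := max_eq_left h1.le
    have e4 : max w (v - (1-H)*δ) = w := max_eq_left h2.le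
    have e1 : u ≤ max w u := le_max_right _ _
    have e3 : v ≤ max w v := le_max_right _ _
    nlinarith

lemma aux_int (ε : ℝ → ℝ) (hmono : Antitone ε) (hnonneg : ∀ x, 0 ≤ ε x) {p q : ℝ}
    (hp : 0 < p) :
    MeasureTheory.IntegrableOn (fun x => ε x / x) (Set.Ioc p q) := by
  have hmeas : Measurable ε := hmono.measurable
  refine Integrable.mono' (g := fun _ => ε p / p) (integrableOn_const measure_Ioc_lt_top.ne) ?_ ?_
  · exact ((hmeas.comp measurable_id).div measurable_id).aestronglyMeasurable
  · filter_upwards [ae_restrict_mem measurableSet_Ioc] with x hx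
    have hxp : p < x := hx.1
    rw [Real.norm_eq_abs, abs_of_nonneg (div_nonneg (hnonneg x) (hp.trans hxp).le)]
    exact div_le_div₀ (hnonneg p) (hmono hxp.le) hp hxp.le

lemma aux_low (ε : ℝ → ℝ) (hmono : Antitone ε) (hnonneg : ∀ x, 0 ≤ ε x) {p q G : ℝ}
    (hp : 0 < p) (hpq : p ≤ q) (hG0 : 0 ≤ G) (hG : ∀ x ∈ Set.Ioc p q, G ≤ ε x) :
    G * (Real.log q - Real.log p) ≤ ∫ x in Set.Ioc p q, ε x / x := by
  have hq : 0 < q := hp.trans_le hpq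
  have h2 : MeasureTheory.IntegrableOn (fun x => G / x) (Set.Ioc p q) := by
    refine Integrable.mono' (g := fun _ => G / p) (integrableOn_const measure_Ioc_lt_top.ne) ?_ ?_
    · exact (measurable_const.div measurable_id).aestronglyMeasurable
    · filter_upwards [ae_restrict_mem measurableSet_Ioc] with x hx
      rw [Real.norm_eq_abs, abs_of_nonneg (div_nonneg hG0 (hp.trans hx.1).le)]
      exact div_le_div_of_nonneg_left hG0 hp hx.1.le |>.trans le_rfl
  have h3 : ∫ x in Set.Ioc p q, G / x ≤ ∫ x in Set.Ioc p q, ε x / x := by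
    refine setIntegral_mono_on h2 (aux_int ε hmono hnonneg hp) measurableSet_Ioc ?_
    intro x hx
    exact (div_le_div_iff_of_pos_right (hp.trans hx.1)).mpr (hG x hx)
  have h4 : ∫ x in Set.Ioc p q, G / x = G * (Real.log q - Real.log p) := by
    simp_rw [div_eq_mul_inv]
    rw [MeasureTheory.integral_const_mul, ← intervalIntegral.integral_of_le hpq,
      integral_inv_of_pos hp hq, Real.log_div hq.ne' hp.ne']
  linarith
lemma aux_rev (ε : ℝ → ℝ) (hmono : Antitone ε) (hnonneg : ∀ x, 0 ≤ ε x)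
    (γ τ H : ℝ) (hγ : 1 < γ) (hτ : 0 < τ) (hH0 : 0 < H) (hH1 : H < 1)
    (σ c : ℝ) (hσ : 0 ≤ σ) (hc : 0 < c)
    (hS : Summable fun k : ℤ => ε ((σ + c * (τ * γ ^ k)) / (τ * γ ^ k) ^ H)) :
    MeasureTheory.IntegrableOn (fun x => ε x / x)
      (Set.Ioi (c ^ H * σ ^ (1 - H) / γ ^ (H * (1 - H)))) := by
  have hγ0 : (0:ℝ) < γ := lt_trans one_pos hγ
  have hδ : 0 < Real.log γ := Real.log_pos hγ
  set δ := Real.log γ with hδdef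
  have hxk : ∀ k : ℤ, (0:ℝ) < τ * γ ^ k := fun k => mul_pos hτ (zpow_pos hγ0 k)
  have hxH : ∀ k : ℤ, (0:ℝ) < (τ * γ ^ k) ^ H := fun k => Real.rpow_pos_of_pos (hxk k) H
  set F : ℤ → ℝ := fun k => ε ((σ + c * (τ * γ ^ k)) / (τ * γ ^ k) ^ H) with hFdef
  set a : ℤ → ℝ := fun k => σ / (τ * γ ^ k) ^ H with hadef
  set b : ℤ → ℝ := fun k => c * (τ * γ ^ k) ^ (1 - H) with hbdef
  have hb : ∀ k, 0 < b k := fun k => mul_pos hc (Real.rpow_pos_of_pos (hxk k) _)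
  have hab : ∀ k : ℤ, (σ + c * (τ * γ ^ k)) / (τ * γ ^ k) ^ H = a k + b k := by
    intro k
    have h1 : (τ * γ ^ k) ^ (1 - H) = (τ * γ ^ k) / (τ * γ ^ k) ^ H := by
      rw [Real.rpow_sub (hxk k), Real.rpow_one]
    simp only [hadef, hbdef, h1]
    field_simp
  have hbmono : Monotone b := by
    apply monotone_int_of_le_succ
    intro k
    simp only [hbdef]
    have h1 : τ * γ ^ (k+1) = (τ * γ ^ k) * γ := by rw [zpow_add_one₀ hγ0.ne']; ring
    rw [h1, Real.mul_rpow (hxk k).le hγ0.le]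
    have h2 : 1 ≤ γ ^ (1 - H) := Real.one_le_rpow hγ.le (by linarith)
    have h3 : 0 < (τ * γ ^ k) ^ (1 - H) := Real.rpow_pos_of_pos (hxk k) _
    nlinarith [mul_nonneg (mul_pos hc h3).le (sub_nonneg.mpr h2)]
  by_cases hσ0 : σ = 0
  · subst hσ0
    have hz0 : c ^ H * (0:ℝ) ^ (1 - H) / γ ^ (H * (1 - H)) = 0 := by
      rw [Real.zero_rpow (sub_ne_zero.mpr (by linarith))]; ring
    rw [hz0]
    by_cases h0 : ∃ x₀, 0 < x₀ ∧ 0 < ε x₀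
    · exfalso
      obtain ⟨x₀, hx₀p, hx₀⟩ := h0
      set t : ℝ := (x₀ / c) ^ (1 - H)⁻¹ with htdef
      have ht : 0 < t := Real.rpow_pos_of_pos (div_pos hx₀p hc) _
      have htpow : t ^ (1 - H) = x₀ / c := Real.rpow_inv_rpow (div_pos hx₀p hc).le (sub_ne_zero.mpr (by linarith))
      obtain ⟨n, hn⟩ := pow_unbounded_of_one_lt (τ / t) hγ
      set K : ℤ := -(n : ℤ) with hKdef
      have hK : τ * γ ^ K ≤ t := by
        have h1 : (γ:ℝ) ^ K = ((γ:ℝ) ^ n)⁻¹ := by rw [hKdef, zpow_neg, zpow_natCast]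
        rw [h1]
        rw [div_lt_iff₀ ht] at hn
        rw [mul_inv_le_iff₀ (pow_pos hγ0 n)]
        nlinarith
      have hbK : b K ≤ x₀ := by
        simp only [hbdef]
        have h2 : (τ * γ ^ K) ^ (1 - H) ≤ t ^ (1 - H) :=
          Real.rpow_le_rpow (hxk K).le hK (by linarith)
        rw [htpow] at h2
        calc c * (τ * γ ^ K) ^ (1 - H) ≤ c * (x₀ / c) := by nlinarith
          _ = x₀ := by field_simp
      have hev : ∀ᶠ k in Filter.cofinite, F k < ε x₀ :=
        hS.tendsto_cofinite_zero.eventually_lt_const hx₀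
      have hfin : {k : ℤ | ¬ F k < ε x₀}.Finite := by
        simpa using Filter.eventually_cofinite.mp hev
      refine ((Set.Iic_infinite K).mono (fun k hk => ?_)) hfin
      have hbk : b k ≤ x₀ := le_trans (hbmono hk) hbK
      have hle : ε x₀ ≤ F k := by
        simp only [hFdef]
        rw [hab k]
        have hak : a k = 0 := by simp [hadef]
        rw [hak, zero_add]
        exact hmono hbk
      exact not_lt.mpr hle
    · push_neg at h0
      have hz : ∀ x, 0 < x → ε x = 0 := fun x hx => le_antisymm (h0 x hx) (hnonneg x)
      refine (integrable_zero _ _ _).congr ?_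
      filter_upwards [ae_restrict_mem measurableSet_Ioi] with x hx
      rw [hz x hx, zero_div]; rfl
  · have hσp : 0 < σ := lt_of_le_of_ne hσ (Ne.symm hσ0)
    set z : ℝ := c ^ H * σ ^ (1 - H) / γ ^ (H * (1 - H)) with hzdef
    have hz : 0 < z := by
      apply div_pos (mul_pos (Real.rpow_pos_of_pos hc H) (Real.rpow_pos_of_pos hσp _))
        (Real.rpow_pos_of_pos hγ0 _)
    have ha : ∀ k, 0 < a k := fun k => div_pos hσp (hxH k)
    have hloga : ∀ k, Real.log (a k) = Real.log σ - H * Real.log (τ * γ ^ k) := by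
      intro k
      simp only [hadef]
      rw [Real.log_div hσp.ne' (hxH k).ne', Real.log_rpow (hxk k)]
    have hlogb : ∀ k, Real.log (b k) = Real.log c + (1 - H) * Real.log (τ * γ ^ k) := by
      intro k
      simp only [hbdef]
      rw [Real.log_mul hc.ne' (Real.rpow_pos_of_pos (hxk k) _).ne', Real.log_rpow (hxk k)]
    have hlogz : Real.log z = H * Real.log c + (1 - H) * Real.log σ - H * (1 - H) * δ := by
      rw [hzdef, Real.log_div (mul_pos (Real.rpow_pos_of_pos hc H) (Real.rpow_pos_of_pos hσp _)).ne'
        (Real.rpow_pos_of_pos hγ0 _).ne',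
        Real.log_mul (Real.rpow_pos_of_pos hc H).ne' (Real.rpow_pos_of_pos hσp _).ne',
        Real.log_rpow hc, Real.log_rpow hσp, Real.log_rpow hγ0]
    have hkey : ∀ k, (1 - H) * Real.log (a k) + H * Real.log (b k) = Real.log z + H * (1 - H) * δ := by
      intro k; rw [hloga, hlogb, hlogz]; ring
    obtain ⟨n₀, hn₀⟩ := pow_unbounded_of_one_lt (σ / (c * τ)) hγ
    set j₀ : ℤ := (n₀ : ℤ) with hj₀def
    have hσcτ : σ ≤ c * (τ * γ ^ j₀) := by
      have h1 : (γ:ℝ) ^ j₀ = (γ:ℝ) ^ n₀ := zpow_natCast γ n₀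
      rw [h1]
      rw [div_lt_iff₀ (mul_pos hc hτ)] at hn₀
      nlinarith
    have haleb : ∀ n : ℕ, a (j₀ + n) ≤ b (j₀ + n) := by
      intro n
      have hx := hxk (j₀ + n)
      simp only [hadef, hbdef]
      rw [div_le_iff₀ (hxH _)]
      have h2 : (τ * γ ^ (j₀ + (n:ℤ))) ^ (1 - H) * (τ * γ ^ (j₀ + (n:ℤ))) ^ H = τ * γ ^ (j₀ + (n:ℤ)) := by
        rw [← Real.rpow_add hx]; norm_num
      have h3 : c * (τ * γ ^ j₀) ≤ c * (τ * γ ^ (j₀ + (n:ℤ))) := by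
        have hzz : (γ:ℝ) ^ j₀ ≤ γ ^ (j₀ + (n:ℤ)) := zpow_le_zpow_right₀ hγ.le (by omega)
        exact mul_le_mul_of_nonneg_left (mul_le_mul_of_nonneg_left hzz hτ.le) hc.le
      calc σ ≤ c * (τ * γ ^ (j₀ + (n:ℤ))) := le_trans hσcτ h3
        _ = c * (τ * γ ^ (j₀ + (n:ℤ))) ^ (1 - H) * (τ * γ ^ (j₀ + (n:ℤ))) ^ H := by rw [mul_assoc, h2]
    set ρ : ℝ := γ ^ (1 - H) with hρdef
    have hρ : 1 < ρ := by
      have := Real.rpow_lt_rpow (le_of_lt one_pos) hγ (by linarith : (0:ℝ) < 1 - H)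
      rwa [Real.one_rpow] at this
    have hρ0 : 0 < ρ := lt_trans one_pos hρ
    set M : ℝ := 2 * b j₀ with hMdef
    have hM0 : 0 < M := by have := hb j₀; rw [hMdef]; linarith
    have hbshift : ∀ n : ℕ, b (j₀ + n) = b j₀ * ρ ^ n := by
      intro n
      simp only [hbdef]
      have h1 : τ * γ ^ (j₀ + (n:ℤ)) = (τ * γ ^ j₀) * γ ^ (n:ℤ) := by
        rw [zpow_add₀ hγ0.ne']; ring
      rw [h1, Real.mul_rpow (hxk j₀).le (zpow_pos hγ0 _).le]
      have h2 : ((γ:ℝ) ^ (n:ℤ)) ^ (1 - H) = ρ ^ n := by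
        rw [zpow_natCast, ← Real.rpow_natCast γ n, ← Real.rpow_mul hγ0.le, mul_comm,
          Real.rpow_mul hγ0.le, Real.rpow_natCast]
      rw [h2]; ring
    have hzb : z ≤ b j₀ := by
      have hk := hkey j₀
      have h1 : a j₀ ≤ b j₀ := by simpa using haleb 0
      have h2 : Real.log (a j₀) ≤ Real.log (b j₀) := Real.log_le_log (ha j₀) h1
      have h3 : Real.log z < Real.log (b j₀) := by
        nlinarith [mul_le_mul_of_nonneg_left h2 (by linarith : (0:ℝ) ≤ 1 - H),
          mul_pos (mul_pos hH0 (by linarith : (0:ℝ) < 1 - H)) hδ]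
      exact ((Real.log_lt_log_iff hz (hb j₀)).mp h3).le
    have hzM : z ≤ M := by have := hb j₀; rw [hMdef]; linarith
    rw [← Set.Ioc_union_Ioi_eq_Ioi hzM]
    refine (aux_int ε hmono hnonneg hz).union ?_
    refine ⟨((hmono.measurable).div measurable_id).aestronglyMeasurable, ?_⟩
    rw [hasFiniteIntegral_iff_ofReal ?hnn]
    case hnn =>
      filter_upwards [ae_restrict_mem measurableSet_Ioi] with x hx
      exact div_nonneg (hnonneg x) (le_of_lt (hM0.trans hx))
    have hcov : Set.Ioi M ⊆ ⋃ n : ℕ, Set.Ioc (M * ρ ^ n) (M * ρ ^ (n + 1)) := by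
      intro x hx
      simp only [Set.mem_Ioi] at hx
      have hex : ∃ n : ℕ, x ≤ M * ρ ^ (n + 1) := by
        obtain ⟨m, hm⟩ := pow_unbounded_of_one_lt (x / M) hρ
        refine ⟨m, ?_⟩
        rw [div_lt_iff₀ hM0] at hm
        have : (ρ:ℝ) ^ m ≤ ρ ^ (m + 1) := by
          have := pow_pos hρ0 m
          calc (ρ:ℝ) ^ m = ρ ^ m * 1 := by ring
            _ ≤ ρ ^ m * ρ := by nlinarith
            _ = ρ ^ (m + 1) := by ring
        nlinarith
      classical
      refine Set.mem_iUnion.mpr ⟨Nat.find hex, ?_, Nat.find_spec hex⟩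
      rcases Nat.eq_zero_or_pos (Nat.find hex) with h | h
      · rw [h]; simpa using hx
      · obtain ⟨n', hn'⟩ : ∃ n', Nat.find hex = n' + 1 := ⟨Nat.find hex - 1, by omega⟩
        have hmin := Nat.find_min hex (by omega : n' < Nat.find hex)
        push_neg at hmin
        rw [hn']
        exact hmin
    have hsum : Summable (fun n : ℕ => F (j₀ + n)) :=
      hS.comp_injective (fun p q hpq => by simpa using hpq)
    have hstep : ∀ n : ℕ, ∫⁻ x in Set.Ioc (M * ρ ^ n) (M * ρ ^ (n + 1)), ENNReal.ofReal (ε x / x)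
        ≤ ENNReal.ofReal (F (j₀ + n)) * ENNReal.ofReal (ρ - 1) := by
      intro n
      have hP : 0 < M * ρ ^ n := mul_pos hM0 (pow_pos hρ0 n)
      have h2b : M * ρ ^ n = 2 * b (j₀ + n) := by rw [hbshift n, hMdef]; ring
      have hgP : (σ + c * (τ * γ ^ (j₀ + (n:ℤ)))) / (τ * γ ^ (j₀ + (n:ℤ))) ^ H ≤ M * ρ ^ n := by
        rw [hab, h2b]
        have := haleb n
        linarith
      have hεP : ε (M * ρ ^ n) ≤ F (j₀ + n) := by
        simp only [hFdef]
        exact hmono hgP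
      calc ∫⁻ x in Set.Ioc (M * ρ ^ n) (M * ρ ^ (n + 1)), ENNReal.ofReal (ε x / x)
          ≤ ∫⁻ _x in Set.Ioc (M * ρ ^ n) (M * ρ ^ (n + 1)), ENNReal.ofReal (ε (M * ρ ^ n) / (M * ρ ^ n)) := by
            refine setLIntegral_mono' measurableSet_Ioc (fun x hx => ENNReal.ofReal_le_ofReal ?_)
            exact div_le_div₀ (hnonneg _) (hmono hx.1.le) hP hx.1.le
        _ = ENNReal.ofReal (ε (M * ρ ^ n) / (M * ρ ^ n)) * ENNReal.ofReal (M * ρ ^ (n + 1) - M * ρ ^ n) := by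
            rw [setLIntegral_const, Real.volume_Ioc]
        _ = ENNReal.ofReal (ε (M * ρ ^ n) / (M * ρ ^ n) * (M * ρ ^ (n + 1) - M * ρ ^ n)) := by
            rw [ENNReal.ofReal_mul (div_nonneg (hnonneg _) hP.le)]
        _ = ENNReal.ofReal (ε (M * ρ ^ n) * (ρ - 1)) := by
            congr 1
            have hr : M * ρ ^ (n + 1) - M * ρ ^ n = (M * ρ ^ n) * (ρ - 1) := by ring
            rw [hr, div_mul_eq_mul_div, mul_comm (M * ρ ^ n) (ρ - 1), ← mul_assoc,
              mul_div_assoc, div_self hP.ne', mul_one]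
        _ ≤ ENNReal.ofReal (F (j₀ + n)) * ENNReal.ofReal (ρ - 1) := by
            rw [← ENNReal.ofReal_mul (le_trans (hnonneg _) hεP)]
            exact ENNReal.ofReal_le_ofReal (mul_le_mul_of_nonneg_right hεP (by linarith))
    calc ∫⁻ x in Set.Ioi M, ENNReal.ofReal (ε x / x)
        ≤ ∫⁻ x in ⋃ n : ℕ, Set.Ioc (M * ρ ^ n) (M * ρ ^ (n + 1)), ENNReal.ofReal (ε x / x) :=
          lintegral_mono_set hcov
      _ ≤ ∑' n : ℕ, ∫⁻ x in Set.Ioc (M * ρ ^ n) (M * ρ ^ (n + 1)), ENNReal.ofReal (ε x / x) :=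
          lintegral_iUnion_le _ _
      _ ≤ ∑' n : ℕ, ENNReal.ofReal (F (j₀ + n)) * ENNReal.ofReal (ρ - 1) :=
          ENNReal.tsum_le_tsum hstep
      _ = (∑' n : ℕ, ENNReal.ofReal (F (j₀ + n))) * ENNReal.ofReal (ρ - 1) :=
          ENNReal.tsum_mul_right
      _ < ⊤ := by
          rw [← ENNReal.ofReal_tsum_of_nonneg (fun n => hnonneg _) hsum]
          exact ENNReal.mul_lt_top ENNReal.ofReal_lt_top ENNReal.ofReal_lt_top

theorem stmt_5 (ε : ℝ → ℝ) (hmono : Antitone ε) (hnonneg : ∀ x, 0 ≤ ε x)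
    (γ τ H : ℝ) (hγ : 1 < γ) (hτ : 0 < τ) (hH0 : 0 < H) (hH1 : H < 1)
    (σ c : ℝ) (hσ : 0 ≤ σ) (hc : 0 < c) :
    ∑' k : ℤ, ε ((σ + c * (τ * γ ^ k)) / (τ * γ ^ k) ^ H)
      ≤ (1 / (H * (1 - H) * Real.log γ)) *
        ∫ x in Set.Ioi (c ^ H * σ ^ (1 - H) / γ ^ (H * (1 - H))), ε x / x := by
  have hγ0 : (0:ℝ) < γ := lt_trans one_pos hγ
  have hδ : 0 < Real.log γ := Real.log_pos hγ
  set δ := Real.log γ with hδdef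
  have hxk : ∀ k : ℤ, (0:ℝ) < τ * γ ^ k := fun k => mul_pos hτ (zpow_pos hγ0 k)
  have hxH : ∀ k : ℤ, (0:ℝ) < (τ * γ ^ k) ^ H := fun k => Real.rpow_pos_of_pos (hxk k) H
  set F : ℤ → ℝ := fun k => ε ((σ + c * (τ * γ ^ k)) / (τ * γ ^ k) ^ H) with hFdef
  set z : ℝ := c ^ H * σ ^ (1 - H) / γ ^ (H * (1 - H)) with hzdef
  set I : ℝ := ∫ x in Set.Ioi z, ε x / x with hIdef
  have hz0 : 0 ≤ z := div_nonneg (mul_nonneg (Real.rpow_pos_of_pos hc H).le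
    (Real.rpow_nonneg hσ _)) (Real.rpow_pos_of_pos hγ0 _).le
  have hI0 : 0 ≤ I := setIntegral_nonneg measurableSet_Ioi
    (fun x hx => div_nonneg (hnonneg x) (le_trans hz0 (le_of_lt hx)))
  by_cases hInt : MeasureTheory.IntegrableOn (fun x => ε x / x) (Set.Ioi z) volume
  swap
  · have hns : ¬ Summable F := fun hS =>
      hInt (aux_rev ε hmono hnonneg γ τ H hγ hτ hH0 hH1 σ c hσ hc hS)
    rw [tsum_eq_zero_of_not_summable hns]
    have hC : 0 < H * (1 - H) * δ := mul_pos (mul_pos hH0 (by linarith)) hδ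
    exact mul_nonneg (by positivity) hI0
  set a : ℤ → ℝ := fun k => σ / (τ * γ ^ k) ^ H with hadef
  set b : ℤ → ℝ := fun k => c * (τ * γ ^ k) ^ (1 - H) with hbdef
  have hb : ∀ k, 0 < b k := fun k => mul_pos hc (Real.rpow_pos_of_pos (hxk k) _)
  have hab : ∀ k : ℤ, (σ + c * (τ * γ ^ k)) / (τ * γ ^ k) ^ H = a k + b k := by
    intro k
    have h1 : (τ * γ ^ k) ^ (1 - H) = (τ * γ ^ k) / (τ * γ ^ k) ^ H := by
      rw [Real.rpow_sub (hxk k), Real.rpow_one]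
    simp only [hadef, hbdef, h1]
    field_simp
  have hF : ∀ k, F k = ε (a k + b k) := fun k => congrArg ε (hab k)
  have hlogb : ∀ k, Real.log (b k) = Real.log c + (1 - H) * Real.log (τ * γ ^ k) := by
    intro k
    simp only [hbdef]
    rw [Real.log_mul hc.ne' (Real.rpow_pos_of_pos (hxk k) _).ne', Real.log_rpow (hxk k)]
  have hlx : ∀ k : ℤ, Real.log (τ * γ ^ (k+1)) = Real.log (τ * γ ^ k) + δ := by
    intro k
    have h1 : τ * γ ^ (k+1) = (τ * γ ^ k) * γ := by rw [zpow_add_one₀ hγ0.ne']; ring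
    rw [h1, Real.log_mul (hxk k).ne' hγ0.ne']
  have hbstep : ∀ k : ℤ, Real.log (b (k-1)) = Real.log (b k) - (1-H) * δ := by
    intro k
    have h0 := hlx (k-1)
    have h2 : (k-1) + 1 = k := by ring
    rw [h2] at h0
    rw [hlogb k, hlogb (k-1)]
    linear_combination (H - 1) * h0
  have hbmono' : ∀ k : ℤ, b (k-1) ≤ b k := by
    intro k
    refine (Real.log_le_log_iff (hb _) (hb _)).mp ?_
    rw [hbstep k]
    nlinarith
  by_cases hσ0 : σ = 0
  · -- σ = 0 case
    subst hσ0
    have hz00 : z = 0 := by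
      rw [hzdef, Real.zero_rpow (sub_ne_zero.mpr (by linarith))]; ring
    have key : ∀ k : ℤ, F k * ((1-H) * δ) ≤ ∫ x in Set.Ioc (b (k-1)) (b k), ε x / x := by
      intro k
      have h1 : F k = ε (b k) := by
        rw [hF k]
        have : a k = 0 := by simp [hadef]
        rw [this, zero_add]
      have h2 := aux_low ε hmono hnonneg (hb (k-1)) (hbmono' k) (hnonneg (b k))
        (fun x hx => hmono hx.2)
      rw [hbstep k] at h2
      rw [h1]
      calc ε (b k) * ((1-H) * δ) = ε (b k) * (Real.log (b k) - (Real.log (b k) - (1-H)*δ)) := by ring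
        _ ≤ _ := h2
    have hBsub : ∀ k : ℤ, Set.Ioc (b (k-1)) (b k) ⊆ Set.Ioi z := by
      intro k x hx
      rw [hz00] at *
      exact Set.mem_Ioi.mpr (lt_trans (hb (k-1)) hx.1)
    have hbmono : Monotone b := by
      apply monotone_int_of_le_succ
      intro k
      have := hbmono' (k+1)
      simpa using this
    have hsumB : ∀ S : Finset ℤ, ∑ k ∈ S, (∫ x in Set.Ioc (b (k-1)) (b k), ε x / x) ≤ I := by
      intro S
      rw [← MeasureTheory.integral_biUnion_finset S (fun i _ => measurableSet_Ioc)
        ?disj (fun i _ => hInt.mono_set (hBsub i))]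
      case disj =>
        intro i _ j _ hij
        refine Set.Ioc_disjoint_Ioc.mpr ?_
        rcases lt_or_gt_of_ne hij with h | h
        · exact le_trans (min_le_left _ _) (le_trans (hbmono (by omega : i ≤ j - 1)) (le_max_right _ _))
        · exact le_trans (min_le_right _ _) (le_trans (hbmono (by omega : j ≤ i - 1)) (le_max_left _ _))
      refine setIntegral_mono_set hInt ?_
        (HasSubset.Subset.eventuallyLE (Set.iUnion₂_subset (fun i _ => hBsub i)))
      filter_upwards [ae_restrict_mem measurableSet_Ioi] with x hx
      exact div_nonneg (hnonneg x) (le_trans hz0 hx.le)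
    have hfin : ∀ S : Finset ℤ, ∑ k ∈ S, F k ≤ I / ((1-H) * δ) := by
      intro S
      have h1 : ∑ k ∈ S, F k * ((1-H)*δ) ≤ I :=
        le_trans (Finset.sum_le_sum (fun k _ => key k)) (hsumB S)
      rw [← Finset.sum_mul] at h1
      exact (le_div_iff₀ (by nlinarith)).mpr h1
    have hsummable : Summable F := summable_of_sum_le (fun k => hnonneg _) hfin
    refine le_trans (Summable.tsum_le_of_sum_le hsummable hfin) ?_
    rw [one_div, ← div_eq_inv_mul]
    have hhint : (0:ℝ) ≤ ((1-H) * δ) * (1 - H) := mul_nonneg (mul_nonneg (by linarith) hδ.le) (by linarith)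
    exact div_le_div_of_nonneg_left hI0 (mul_pos (mul_pos hH0 (by linarith)) hδ) (by nlinarith)
  · -- σ > 0 case
    have hσp : 0 < σ := lt_of_le_of_ne hσ (Ne.symm hσ0)
    have hz : 0 < z := by
      rw [hzdef]
      exact div_pos (mul_pos (Real.rpow_pos_of_pos hc H) (Real.rpow_pos_of_pos hσp _))
        (Real.rpow_pos_of_pos hγ0 _)
    have ha : ∀ k, 0 < a k := fun k => div_pos hσp (hxH k)
    have hloga : ∀ k, Real.log (a k) = Real.log σ - H * Real.log (τ * γ ^ k) := by
      intro k
      simp only [hadef]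
      rw [Real.log_div hσp.ne' (hxH k).ne', Real.log_rpow (hxk k)]
    have hlogz : Real.log z = H * Real.log c + (1 - H) * Real.log σ - H * (1 - H) * δ := by
      rw [hzdef, Real.log_div (mul_pos (Real.rpow_pos_of_pos hc H) (Real.rpow_pos_of_pos hσp _)).ne'
        (Real.rpow_pos_of_pos hγ0 _).ne',
        Real.log_mul (Real.rpow_pos_of_pos hc H).ne' (Real.rpow_pos_of_pos hσp _).ne',
        Real.log_rpow hc, Real.log_rpow hσp, Real.log_rpow hγ0]
    have hkey : ∀ k, (1 - H) * Real.log (a k) + H * Real.log (b k) = Real.log z + H * (1 - H) * δ := by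
      intro k; rw [hloga, hlogb, hlogz]; ring
    have hastep : ∀ k : ℤ, Real.log (a (k+1)) = Real.log (a k) - H * δ := by
      intro k
      rw [hloga, hloga, hlx k]
      ring
    have hamono' : ∀ k : ℤ, a (k+1) ≤ a k := by
      intro k
      refine (Real.log_le_log_iff (ha _) (ha _)).mp ?_
      rw [hastep k]
      nlinarith [mul_pos hH0 hδ]
    set M : ℤ → ℝ := fun k => max z (a k) with hMdef
    set N : ℤ → ℝ := fun k => max z (b k) with hNdef
    have hM02 : ∀ k, 0 < M k := fun k => lt_of_lt_of_le hz (le_max_left _ _)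
    have hN02 : ∀ k, 0 < N k := fun k => lt_of_lt_of_le hz (le_max_left _ _)
    have hManti : Antitone M := antitone_int_of_succ_le (fun k => max_le_max le_rfl (hamono' k))
    have hNmono : Monotone N := monotone_int_of_le_succ (fun k => max_le_max le_rfl (by simpa using hbmono' (k+1)))
    have hlogM : ∀ k, Real.log (M k) = max (Real.log z) (Real.log (a k)) := fun k => aux_log_max hz (ha k)
    have hlogN : ∀ k, Real.log (N k) = max (Real.log z) (Real.log (b k)) := fun k => aux_log_max hz (hb k)
    have hzab : ∀ k, z ≤ a k + b k := by
      intro k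
      by_contra hcon
      push_neg at hcon
      have h1 : a k < z := lt_of_le_of_lt (le_add_of_nonneg_right (hb k).le) hcon
      have h2 : b k < z := lt_of_le_of_lt (le_add_of_nonneg_left (ha k).le) hcon
      have l1 : Real.log (a k) < Real.log z := Real.log_lt_log (ha k) h1
      have l2 : Real.log (b k) < Real.log z := Real.log_lt_log (hb k) h2
      nlinarith [hkey k, mul_pos (mul_pos hH0 (by linarith : (0:ℝ) < 1-H)) hδ,
        mul_lt_mul_of_pos_left l1 (by linarith : (0:ℝ) < 1-H), mul_lt_mul_of_pos_left l2 hH0]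
    have key : ∀ k : ℤ, F k * (H * ((1-H) * δ)) ≤
        (1-H) * (∫ x in Set.Ioc (M (k+1)) (M k), ε x / x)
          + H * (∫ x in Set.Ioc (N (k-1)) (N k), ε x / x) := by
      intro k
      have hG0 : 0 ≤ ε (a k + b k) := hnonneg _
      have hMk : M k ≤ a k + b k := max_le (hzab k) (le_add_of_nonneg_right (hb k).le)
      have hNk : N k ≤ a k + b k := max_le (hzab k) (le_add_of_nonneg_left (ha k).le)
      have hA := aux_low ε hmono hnonneg (hM02 (k+1)) (hManti (by omega : k ≤ k+1)) hG0
        (fun x hx => hmono (le_trans hx.2 hMk))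
      have hB := aux_low ε hmono hnonneg (hN02 (k-1)) (hNmono (by omega : k-1 ≤ k)) hG0
        (fun x hx => hmono (le_trans hx.2 hNk))
      have hmax := aux_max H δ (Real.log (a k)) (Real.log (b k)) (Real.log z) hH0 hH1 hδ
        (by linarith [hkey k])
      have eA : Real.log (M k) - Real.log (M (k+1)) =
          max (Real.log z) (Real.log (a k)) - max (Real.log z) (Real.log (a k) - H*δ) := by
        rw [hlogM k, hlogM (k+1), hastep k]
      have eB : Real.log (N k) - Real.log (N (k-1)) =
          max (Real.log z) (Real.log (b k)) - max (Real.log z) (Real.log (b k) - (1-H)*δ) := by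
        rw [hlogN k, hlogN (k-1), hbstep k]
      have c1 : ε (a k + b k) * (H*(1-H)*δ) ≤ ε (a k + b k) *
          ((1-H)*(Real.log (M k) - Real.log (M (k+1))) + H*(Real.log (N k) - Real.log (N (k-1)))) := by
        refine mul_le_mul_of_nonneg_left ?_ hG0
        rw [eA, eB]
        exact hmax
      have c2 : (1-H) * (ε (a k + b k) * (Real.log (M k) - Real.log (M (k+1))))
          ≤ (1-H) * (∫ x in Set.Ioc (M (k+1)) (M k), ε x / x) :=
        mul_le_mul_of_nonneg_left hA (by linarith)
      have c3 : H * (ε (a k + b k) * (Real.log (N k) - Real.log (N (k-1))))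
          ≤ H * (∫ x in Set.Ioc (N (k-1)) (N k), ε x / x) :=
        mul_le_mul_of_nonneg_left hB hH0.le
      have e5 : ε (a k + b k) * ((1-H)*(Real.log (M k) - Real.log (M (k+1)))
          + H*(Real.log (N k) - Real.log (N (k-1))))
          = (1-H) * (ε (a k + b k) * (Real.log (M k) - Real.log (M (k+1))))
          + H * (ε (a k + b k) * (Real.log (N k) - Real.log (N (k-1)))) := by ring
      rw [hF k]
      calc ε (a k + b k) * (H * ((1-H) * δ)) = ε (a k + b k) * (H*(1-H)*δ) := by ring
        _ ≤ _ := by rw [e5] at c1; linarith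
    have hsubA : ∀ k : ℤ, Set.Ioc (M (k+1)) (M k) ⊆ Set.Ioi z :=
      fun k x hx => lt_of_le_of_lt (le_max_left _ _) hx.1
    have hsubB : ∀ k : ℤ, Set.Ioc (N (k-1)) (N k) ⊆ Set.Ioi z :=
      fun k x hx => lt_of_le_of_lt (le_max_left _ _) hx.1
    have hnnae : (0:ℝ → ℝ) ≤ᵐ[volume.restrict (Set.Ioi z)] fun x => ε x / x := by
      filter_upwards [ae_restrict_mem measurableSet_Ioi] with x hx
      exact div_nonneg (hnonneg x) (le_trans hz0 hx.le)
    have hsumA : ∀ S : Finset ℤ, ∑ k ∈ S, (∫ x in Set.Ioc (M (k+1)) (M k), ε x / x) ≤ I := by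
      intro S
      rw [← MeasureTheory.integral_biUnion_finset S (fun i _ => measurableSet_Ioc)
        ?disjA (fun i _ => hInt.mono_set (hsubA i))]
      case disjA =>
        intro i _ j _ hij
        refine Set.Ioc_disjoint_Ioc.mpr ?_
        rcases lt_or_gt_of_ne hij with h | h
        · exact le_trans (min_le_right _ _) (le_trans (hManti (by omega : i + 1 ≤ j)) (le_max_left _ _))
        · exact le_trans (min_le_left _ _) (le_trans (hManti (by omega : j + 1 ≤ i)) (le_max_right _ _))
      exact setIntegral_mono_set hInt hnnae
        (HasSubset.Subset.eventuallyLE (Set.iUnion₂_subset (fun i _ => hsubA i)))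
    have hsumB : ∀ S : Finset ℤ, ∑ k ∈ S, (∫ x in Set.Ioc (N (k-1)) (N k), ε x / x) ≤ I := by
      intro S
      rw [← MeasureTheory.integral_biUnion_finset S (fun i _ => measurableSet_Ioc)
        ?disjB (fun i _ => hInt.mono_set (hsubB i))]
      case disjB =>
        intro i _ j _ hij
        refine Set.Ioc_disjoint_Ioc.mpr ?_
        rcases lt_or_gt_of_ne hij with h | h
        · exact le_trans (min_le_left _ _) (le_trans (hNmono (by omega : i ≤ j - 1)) (le_max_right _ _))
        · exact le_trans (min_le_right _ _) (le_trans (hNmono (by omega : j ≤ i - 1)) (le_max_left _ _))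
      exact setIntegral_mono_set hInt hnnae
        (HasSubset.Subset.eventuallyLE (Set.iUnion₂_subset (fun i _ => hsubB i)))
    have hfin : ∀ S : Finset ℤ, ∑ k ∈ S, F k ≤ I / (H * ((1-H) * δ)) := by
      intro S
      have h1 : ∑ k ∈ S, F k * (H * ((1-H)*δ)) ≤ (1-H) * I + H * I := by
        calc ∑ k ∈ S, F k * (H * ((1-H)*δ))
            ≤ ∑ k ∈ S, ((1-H) * (∫ x in Set.Ioc (M (k+1)) (M k), ε x / x)
              + H * (∫ x in Set.Ioc (N (k-1)) (N k), ε x / x)) :=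
              Finset.sum_le_sum (fun k _ => key k)
          _ = (1-H) * (∑ k ∈ S, ∫ x in Set.Ioc (M (k+1)) (M k), ε x / x)
              + H * (∑ k ∈ S, ∫ x in Set.Ioc (N (k-1)) (N k), ε x / x) := by
              rw [Finset.sum_add_distrib, Finset.mul_sum, Finset.mul_sum]
          _ ≤ (1-H) * I + H * I := by
              have u1 := mul_le_mul_of_nonneg_left (hsumA S) (by linarith : (0:ℝ) ≤ 1-H)
              have u2 := mul_le_mul_of_nonneg_left (hsumB S) hH0.le
              linarith
      rw [← Finset.sum_mul] at h1
      have h2 : (∑ k ∈ S, F k) * (H * ((1-H)*δ)) ≤ I := by linarith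
      exact (le_div_iff₀ (by nlinarith [mul_pos (mul_pos hH0 (by linarith : (0:ℝ) < 1-H)) hδ])).mpr h2
    have hsummable : Summable F := summable_of_sum_le (fun k => hnonneg _) hfin
    refine le_trans (Summable.tsum_le_of_sum_le hsummable hfin) ?_
    have he : 1 / (H * (1 - H) * δ) * I = I / (H * ((1-H) * δ)) := by
      rw [one_div, ← div_eq_inv_mul, mul_assoc]
    rw [he]
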